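/- Let A ∈ SL(2,ℤ) be a matrix with trace strictly greater than 2 (a hyperbolic matrix with positive trace). Then there exists T ∈ SL(2,ℤ) such that all four entries of T·A·T⁻¹ are nonnegative integers. -/

import Mathlib

open Matrix

abbrev SL2 := Matrix.SpecialLinearGroup (Fin 2) ℤ

def mkSL (a b c d : ℤ) (h : a*d - b*c = 1) : SL2 :=
  ⟨!![a,b;c,d], by rw [Matrix.det_fin_two_of]; linarith⟩

lemma conj_coe (p q r s : ℤ) (h : p*s - q*r = 1) (A : SL2) :
    ((mkSL p q r s h * A * (mkSL p q r s h)⁻¹ : SL2) : Matrix (Fin 2) (Fin 2) ℤ) =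
    !![(p*(A.1 0 0)+q*(A.1 1 0))*s - (p*(A.1 0 1)+q*(A.1 1 1))*r,
       -(p*(A.1 0 0)+q*(A.1 1 0))*q + (p*(A.1 0 1)+q*(A.1 1 1))*p;
       (r*(A.1 0 0)+s*(A.1 1 0))*s - (r*(A.1 0 1)+s*(A.1 1 1))*r,
       -(r*(A.1 0 0)+s*(A.1 1 0))*q + (r*(A.1 0 1)+s*(A.1 1 1))*p] := by
  have hA : (A : Matrix (Fin 2) (Fin 2) ℤ) = !![A.1 0 0, A.1 0 1; A.1 1 0, A.1 1 1] :=
    Matrix.eta_fin_two _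
  rw [Matrix.SpecialLinearGroup.coe_mul, Matrix.SpecialLinearGroup.coe_mul,
    Matrix.SpecialLinearGroup.coe_inv, hA]
  show (!![p,q;r,s] : Matrix (Fin 2) (Fin 2) ℤ) * _ * adjugate !![p,q;r,s] = _
  rw [Matrix.adjugate_fin_two_of, Matrix.mul_fin_two, Matrix.mul_fin_two]
  ext i j
  fin_cases i <;> fin_cases j <;> simp <;> ring

def Sm : SL2 := mkSL 0 (-1) 1 0 (by ring)
def Tm (n : ℤ) : SL2 := mkSL 1 n 0 1 (by ring)

lemma Sm_conj (A : SL2) :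
    ((Sm * A * Sm⁻¹ : SL2) : Matrix (Fin 2) (Fin 2) ℤ) =
      !![A.1 1 1, -(A.1 1 0); -(A.1 0 1), A.1 0 0] := by
  unfold Sm
  rw [conj_coe]
  ext i j
  fin_cases i <;> fin_cases j <;> simp

lemma Tm_conj (n : ℤ) (A : SL2) :
    ((Tm n * A * (Tm n)⁻¹ : SL2) : Matrix (Fin 2) (Fin 2) ℤ) =
      !![A.1 0 0 + n * A.1 1 0, A.1 0 1 + n * A.1 1 1 - n * (A.1 0 0 + n * A.1 1 0);
         A.1 1 0, A.1 1 1 - n * A.1 1 0] := by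
  unfold Tm
  rw [conj_coe]
  ext i j
  fin_cases i <;> fin_cases j <;> simp <;> ring

def tSL (A : SL2) : SL2 := ⟨A.1ᵀ, by rw [Matrix.det_transpose]; exact A.2⟩

lemma tSL_tSL (A : SL2) : tSL (tSL A) = A := Subtype.ext (transpose_transpose _)

lemma tconj (M B : SL2) :
    (((tSL M)⁻¹ * tSL B * ((tSL M)⁻¹)⁻¹ : SL2) : Matrix (Fin 2) (Fin 2) ℤ) =
      ((M * B * M⁻¹ : SL2) : Matrix (Fin 2) (Fin 2) ℤ)ᵀ := by
  rw [inv_inv]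
  simp only [Matrix.SpecialLinearGroup.coe_mul, Matrix.SpecialLinearGroup.coe_inv, tSL,
    transpose_mul, Matrix.adjugate_transpose, Matrix.mul_assoc]
  exact Matrix.mul_assoc _ _ _

lemma detA (A : SL2) : A.1 0 0 * A.1 1 1 - A.1 0 1 * A.1 1 0 = 1 := by
  have := A.2
  rwa [Matrix.det_fin_two] at this

lemma exists_shift (c d : ℤ) (hc : c < 0) : ∃ n : ℤ, 1 ≤ d - n * c ∧ d - n * c ≤ -c := by
  refine ⟨-((d-1)/(-c)), ?_⟩
  have h := Int.emod_def (d-1) (-c)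
  have h0 : 0 ≤ (d-1) % (-c) := Int.emod_nonneg _ (by omega)
  have h1 : (d-1) % (-c) < -c := Int.emod_lt_of_pos _ (by omega)
  have e : d - (-((d-1)/(-c))) * c = 1 + (d-1) % (-c) := by linear_combination -h
  omega

lemma mixed : ∀ (m : ℕ) (A : SL2), 3 ≤ A.1 0 0 + A.1 1 1 → 0 < A.1 0 1 → A.1 1 0 < 0 →
    (-A.1 1 0).toNat ≤ m →
    ∃ T : SL2, ∀ i j, 0 ≤ ((T * A * T⁻¹ : SL2) : Matrix (Fin 2) (Fin 2) ℤ) i j := by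
  intro m
  induction m with
  | zero => intro A ht hb hc hm; omega
  | succ m ih =>
    intro A ht hb hc hm
    have hdet := detA A
    set a := A.1 0 0 with ha'
    set b := A.1 0 1 with hb'
    set c := A.1 1 0 with hc'
    set d := A.1 1 1 with hd'
    obtain ⟨n, hd1a, hd1b⟩ := exists_shift c d hc
    obtain ⟨A1, hA1def⟩ : ∃ A1 : SL2, A1 = Tm n * A * (Tm n)⁻¹ := ⟨_, rfl⟩
    have hA1 : (A1 : Matrix (Fin 2) (Fin 2) ℤ) =
        !![a + n * c, b + n * d - n * (a + n * c); c, d - n * c] := by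
      rw [hA1def]; exact Tm_conj n A
    obtain ⟨a1, ha1'⟩ : ∃ x : ℤ, x = a + n * c := ⟨_, rfl⟩
    obtain ⟨b1, hb1'⟩ : ∃ x : ℤ, x = b + n * d - n * (a + n * c) := ⟨_, rfl⟩
    obtain ⟨d1, hd1'⟩ : ∃ x : ℤ, x = d - n * c := ⟨_, rfl⟩
    rw [← hb1', ← ha1', ← hd1'] at hA1
    rw [← hd1'] at hd1a hd1b
    have hdet1 : a1 * d1 - b1 * c = 1 := by
      rw [ha1', hb1', hd1']; linear_combination hdet
    have htr1 : a1 + d1 = a + d := by rw [ha1', hd1']; ring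
    have e00 : A1.1 0 0 = a1 := by rw [hA1]; simp
    have e01 : A1.1 0 1 = b1 := by rw [hA1]; simp
    have e10 : A1.1 1 0 = c := by rw [hA1]; simp
    have e11 : A1.1 1 1 = d1 := by rw [hA1]; simp
    rcases le_or_gt b1 0 with hcase | hcase
    · -- b1 ≤ 0 : finish with Sm * Tm n
      have ha1nn : 0 ≤ a1 := by
        nlinarith [mul_nonneg (neg_nonneg.mpr hcase) (neg_nonneg.mpr hc.le)]
      refine ⟨Sm * Tm n, ?_⟩
      have hgrp : (Sm * Tm n) * A * (Sm * Tm n)⁻¹ = Sm * A1 * Sm⁻¹ := by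
        rw [hA1def]; group
      have hmat : ((Sm * Tm n * A * (Sm * Tm n)⁻¹ : SL2) : Matrix (Fin 2) (Fin 2) ℤ) =
          !![d1, -c; -b1, a1] := by
        rw [hgrp, Sm_conj, e00, e01, e10, e11]
      intro i j
      rw [hmat]
      fin_cases i <;> fin_cases j <;> simp <;> omega
    · -- 0 < b1 : descend
      have hnegc : (0:ℤ) < -c := by omega
      have ha1 : a1 ≤ 0 := by nlinarith [mul_pos hcase hnegc]
      have h1 : 0 ≤ (-a1) * (-c - d1) := mul_nonneg (by omega) (by omega)
      have h2 : -a1 ≤ -c - 3 := by omega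
      have hb1M : b1 < -c := by
        nlinarith [h1, h2, mul_le_mul_of_nonneg_right h2 hnegc.le, mul_pos hnegc hnegc]
      obtain ⟨B, hBdef⟩ : ∃ B : SL2, B = Sm * A1 * Sm⁻¹ := ⟨_, rfl⟩
      have hB : (B : Matrix (Fin 2) (Fin 2) ℤ) = !![d1, -c; -b1, a1] := by
        rw [hBdef, Sm_conj, e00, e01, e10, e11]
      have f00 : B.1 0 0 = d1 := by rw [hB]; simp
      have f01 : B.1 0 1 = -c := by rw [hB]; simp
      have f10 : B.1 1 0 = -b1 := by rw [hB]; simp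
      have f11 : B.1 1 1 = a1 := by rw [hB]; simp
      obtain ⟨T', hT'⟩ := ih B (by rw [f00, f11]; omega) (by rw [f01]; omega)
        (by rw [f10]; omega) (by rw [f10]; omega)
      refine ⟨T' * Sm * Tm n, ?_⟩
      have hgrp : (T' * Sm * Tm n) * A * (T' * Sm * Tm n)⁻¹ = T' * B * T'⁻¹ := by
        rw [hBdef, hA1def]; group
      rw [hgrp]
      exact hT'


/-- Every matrix `A ∈ SL(2,ℤ)` with trace `> 2` is conjugate in `SL(2,ℤ)`
to a matrix all of whose entries are nonnegative. -/
theorem hyperbolic_conj_nonneg (A : Matrix.SpecialLinearGroup (Fin 2) ℤ)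
    (hA : 2 < Matrix.trace (A : Matrix (Fin 2) (Fin 2) ℤ)) :
    ∃ T : Matrix.SpecialLinearGroup (Fin 2) ℤ,
      ∀ i j, 0 ≤ ((T * A * T⁻¹ : Matrix.SpecialLinearGroup (Fin 2) ℤ) :
        Matrix (Fin 2) (Fin 2) ℤ) i j := by
  rw [Matrix.trace_fin_two] at hA
  have hdet := detA A
  set a := A.1 0 0 with ha'
  set b := A.1 0 1 with hb'
  set c := A.1 1 0 with hc'
  set d := A.1 1 1 with hd'
  have ht : 3 ≤ a + d := by omega
  rcases le_or_gt 0 b with hb | hb <;> rcases le_or_gt 0 c with hc | hc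
  · -- b ≥ 0, c ≥ 0 : identity works
    have hbc : 0 ≤ b * c := mul_nonneg hb hc
    have ha0 : 0 ≤ a := by nlinarith
    have hd0 : 0 ≤ d := by nlinarith
    refine ⟨1, ?_⟩
    have h1 : ((1 * A * 1⁻¹ : SL2) : Matrix (Fin 2) (Fin 2) ℤ) =
        !![a, b; c, d] := by
      rw [one_mul, inv_one, mul_one, ha', hb', hc', hd']
      exact Matrix.eta_fin_two _
    intro i j
    rw [h1]
    fin_cases i <;> fin_cases j <;> simp <;> omega
  · -- b ≥ 0, c < 0
    rcases eq_or_lt_of_le hb with hb0 | hb0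
    · exfalso
      have : a * d = 1 := by rw [← hb0] at hdet; linarith
      rcases Int.eq_one_or_neg_one_of_mul_eq_one' this with ⟨h1, h2⟩ | ⟨h1, h2⟩ <;> omega
    · exact mixed (-c).toNat A ht hb0 hc le_rfl
  · -- b < 0, c ≥ 0 : transpose trick
    rcases eq_or_lt_of_le hc with hc0 | hc0
    · exfalso
      have : a * d = 1 := by rw [← hc0] at hdet; linarith
      rcases Int.eq_one_or_neg_one_of_mul_eq_one' this with ⟨h1, h2⟩ | ⟨h1, h2⟩ <;> omega
    · obtain ⟨A', hA'def⟩ : ∃ A' : SL2, A' = tSL A := ⟨_, rfl⟩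
      have g00 : A'.1 0 0 = a := by rw [hA'def]; rfl
      have g01 : A'.1 0 1 = c := by rw [hA'def]; rfl
      have g10 : A'.1 1 0 = b := by rw [hA'def]; rfl
      have g11 : A'.1 1 1 = d := by rw [hA'def]; rfl
      obtain ⟨T', hT'⟩ := mixed (-b).toNat A' (by rw [g00, g11]; omega)
        (by rw [g01]; omega) (by rw [g10]; omega) (by rw [g10])
      refine ⟨(tSL T')⁻¹, ?_⟩
      have key := tconj T' A'
      rw [hA'def, tSL_tSL] at key
      rw [← hA'def] at key
      intro i j
      rw [key]
      exact hT' j i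
  · -- b < 0, c < 0 : conjugate by S
    have hbc : 0 < b * c := mul_pos_of_neg_of_neg hb hc
    have ha0 : 0 ≤ a := by nlinarith
    have hd0 : 0 ≤ d := by nlinarith
    refine ⟨Sm, ?_⟩
    have hmat := Sm_conj A
    rw [← ha', ← hb', ← hc', ← hd'] at hmat
    intro i j
    rw [hmat]
    fin_cases i <;> fin_cases j <;> simp <;> omega
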